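/- (Radial singular Alexandrov–Bol inequality.) Let α ∈ [0,1), R > 0, and let g : [0,R] → ℝ satisfy the interior radial Bol hypothesis with parameter α. Set M = 2π∫₀^R s^{1−2α} e^{g(s)} ds. Then ( 2π R^{1−α} e^{g(R)/2} )² ≥ (1/2) · M · ( 8π(1−α) − M ). -/

import Mathlib

open Real MeasureTheory Metric Filter Topology RealInnerProductSpace

noncomputable section

/-- The plane `ℝ²`. -/
abbrev Pl := EuclideanSpace ℝ (Fin 2)

/-- The Laplacian `Δu = ∂²u/∂x₁² + ∂²u/∂x₂²` of a function on `ℝ²`. -/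
def lap (u : Pl → ℝ) (x : Pl) : ℝ :=
  ∑ i : Fin 2, fderiv ℝ (fun y => fderiv ℝ u y (EuclideanSpace.single i 1)) x
    (EuclideanSpace.single i 1)

/-- `g` satisfies the interior radial Bol hypothesis with parameter `a` on `[0,R]`:
it is continuous and strictly decreasing on `[0,R]`, differentiable on `(0,R)`, and
`2πr·(−g'(r)) ≤ 2π∫₀^r s^{1−2a} e^{g(s)} ds` for every `r ∈ (0,R)`. -/
def InteriorBol (a R : ℝ) (g : ℝ → ℝ) : Prop :=
  ContinuousOn g (Set.Icc 0 R) ∧ StrictAntiOn g (Set.Icc 0 R) ∧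
  (∀ r ∈ Set.Ioo (0:ℝ) R, DifferentiableAt ℝ g r) ∧
  (∀ r ∈ Set.Ioo (0:ℝ) R,
    2 * π * r * (-(deriv g r)) ≤ 2 * π * ∫ s in (0:ℝ)..r, s ^ (1 - 2*a) * Real.exp (g s))

/-- Radial singular Alexandrov–Bol inequality. -/
theorem radial_singular_bol (a R : ℝ) (ha : a ∈ Set.Ico (0:ℝ) 1) (hR : 0 < R)
    (g : ℝ → ℝ) (hg : InteriorBol a R g) :
    (2 * π * R ^ (1-a) * Real.exp (g R / 2)) ^ 2 ≥
      (1/2) * (2 * π * ∫ s in (0:ℝ)..R, s ^ (1 - 2*a) * Real.exp (g s)) *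
        (8 * π * (1 - a) - 2 * π * ∫ s in (0:ℝ)..R, s ^ (1 - 2*a) * Real.exp (g s)) := by
  obtain ⟨hgc, -, hgd, hbol⟩ := hg
  have ha0 : 0 ≤ a := ha.1
  have ha1 : a < 1 := ha.2
  set c : ℝ → ℝ := fun s => s ^ (1 - 2*a) * Real.exp (g s) with hcdef
  have huIcc : Set.uIcc (0:ℝ) R = Set.Icc 0 R := Set.uIcc_of_le hR.le
  -- integrability of c on [0, R]
  have hcint : IntervalIntegrable c volume 0 R := by
    apply (intervalIntegral.intervalIntegrable_rpow' (by linarith : (-1:ℝ) < 1 - 2*a)).mul_continuousOn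
    rw [huIcc]
    exact Real.continuous_exp.comp_continuousOn hgc
  -- the primitive
  set B : ℝ → ℝ := fun r => 2 * π * ∫ s in (0:ℝ)..r, c s with hBdef
  have hBcont : ContinuousOn B (Set.Icc 0 R) := by
    apply ContinuousOn.mul continuousOn_const
    have := intervalIntegral.continuousOn_primitive_interval' hcint
      (Set.left_mem_uIcc (a := (0:ℝ)) (b := R))
    rwa [huIcc] at this
  -- derivative of B on the interior
  have hBderiv : ∀ r ∈ Set.Ioo (0:ℝ) R,
      HasDerivAt B (2 * π * c r) r := by
    intro r hr
    have hsub : IntervalIntegrable c volume 0 r := by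
      apply hcint.mono_set
      rw [huIcc, Set.uIcc_of_le hr.1.le]
      exact Set.Icc_subset_Icc le_rfl hr.2.le
    have hca : ContinuousAt c r := by
      apply ContinuousAt.mul
      · exact Real.continuousAt_rpow_const r _ (Or.inl hr.1.ne')
      · exact Real.continuous_exp.continuousAt.comp (hgd r hr).continuousAt
    have hmeas : StronglyMeasurableAtFilter c (𝓝 r) volume := by
      refine ⟨Set.Ioo 0 R, Ioo_mem_nhds hr.1 hr.2, ?_⟩
      apply ContinuousOn.aestronglyMeasurable _ measurableSet_Ioo
      intro x hx
      apply ContinuousAt.continuousWithinAt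
      apply ContinuousAt.mul
      · exact Real.continuousAt_rpow_const x _ (Or.inl hx.1.ne')
      · exact Real.continuous_exp.continuousAt.comp (hgd x hx).continuousAt
    exact (intervalIntegral.integral_hasDerivAt_right hsub hmeas hca).const_mul (2 * π)
  -- the Q part
  set Q : ℝ → ℝ := fun r => 4 * π ^ 2 * (r ^ (2 - 2*a) * Real.exp (g r)) with hQdef
  have hQderiv : ∀ r ∈ Set.Ioo (0:ℝ) R,
      HasDerivAt Q (4 * π ^ 2 * ((2 - 2*a) * r ^ (1 - 2*a) * Real.exp (g r)
        + r ^ (2 - 2*a) * (Real.exp (g r) * deriv g r))) r := by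
    intro r hr
    have h1 : HasDerivAt (fun x : ℝ => x ^ (2 - 2*a)) ((2 - 2*a) * r ^ (2 - 2*a - 1)) r :=
      Real.hasDerivAt_rpow_const (Or.inl hr.1.ne')
    have h2 : HasDerivAt (fun x => Real.exp (g x)) (Real.exp (g r) * deriv g r) r :=
      ((hgd r hr).hasDerivAt).exp
    have h3 := (h1.mul h2).const_mul (4 * π ^ 2)
    have he : (2 - 2*a - 1 : ℝ) = 1 - 2*a := by ring
    rw [he] at h3
    exact h3
  set f : ℝ → ℝ := fun r => Q r - 4 * π * (1 - a) * B r + B r * B r / 2 with hfdef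
  -- f is monotone on [0, R]
  have hfderiv : ∀ r ∈ Set.Ioo (0:ℝ) R,
      HasDerivAt f (2 * π * r ^ (1 - 2*a) * Real.exp (g r)
        * (2 * π * r * deriv g r + B r)) r := by
    intro r hr
    have h := ((hQderiv r hr).sub (((hBderiv r hr).const_mul (4 * π * (1 - a))))).add
      (((hBderiv r hr).mul (hBderiv r hr)).div_const 2)
    convert h using 1
    · rfl
    · rfl
    · rfl
    have hrsplit : r ^ (2 - 2*a) = r * r ^ (1 - 2*a) := by
      rw [show (2 - 2*a : ℝ) = 1 + (1 - 2*a) by ring, Real.rpow_add hr.1 1 (1 - 2*a),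
        Real.rpow_one]
    simp only [hcdef, hrsplit]
    ring
  have hmono : MonotoneOn f (Set.Icc 0 R) := by
    apply monotoneOn_of_deriv_nonneg (convex_Icc 0 R)
    · apply ContinuousOn.add
      apply ContinuousOn.sub
      · apply continuousOn_const.mul
        apply ContinuousOn.mul
        · intro x hx
          apply ContinuousAt.continuousWithinAt
          exact Real.continuousAt_rpow_const x _ (Or.inr (by linarith))
        · exact Real.continuous_exp.comp_continuousOn hgc
      · exact continuousOn_const.mul hBcont
      · exact (hBcont.mul hBcont).div_const 2
    · rw [interior_Icc]
      intro x hx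
      exact (hfderiv x hx).differentiableAt.differentiableWithinAt
    · rw [interior_Icc]
      intro x hx
      rw [(hfderiv x hx).deriv]
      have h1 : (0:ℝ) ≤ 2 * π * x ^ (1 - 2*a) * Real.exp (g x) :=
        mul_nonneg (mul_nonneg (by positivity) (Real.rpow_nonneg hx.1.le _))
          (Real.exp_nonneg _)
      have h2 : (0:ℝ) ≤ 2 * π * x * deriv g x + B x := by
        have := hbol x hx
        simp only [hBdef, hcdef]
        nlinarith [this]
      exact mul_nonneg h1 h2
  have h0mem : (0:ℝ) ∈ Set.Icc (0:ℝ) R := Set.left_mem_Icc.2 hR.le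
  have hRmem : R ∈ Set.Icc (0:ℝ) R := Set.right_mem_Icc.2 hR.le
  have hf0 : f 0 = 0 := by
    simp only [hfdef, hQdef, hBdef, intervalIntegral.integral_same,
      Real.zero_rpow (by linarith : (2:ℝ) - 2*a ≠ 0)]
    ring
  have hle : f 0 ≤ f R := hmono h0mem hRmem hR.le
  rw [hf0] at hle
  -- unfold f R
  have hQR : Q R = (2 * π * R ^ (1-a) * Real.exp (g R / 2)) ^ 2 := by
    have h1 : (R ^ (1-a) : ℝ) ^ 2 = R ^ (2 - 2*a) := by
      rw [← Real.rpow_natCast (R ^ (1-a)) 2, ← Real.rpow_mul hR.le]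
      norm_num
      congr 1
      ring
    have h2 : Real.exp (g R / 2) ^ 2 = Real.exp (g R) := by
      rw [sq, ← Real.exp_add]
      norm_num
    simp only [hQdef]
    rw [mul_pow, mul_pow, h1, h2]
    ring
  simp only [hfdef, hQR, hBdef, hcdef] at hle
  set M : ℝ := 2 * π * ∫ s in (0:ℝ)..R, s ^ (1 - 2*a) * Real.exp (g s) with hM
  nlinarith [hle]
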